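/- Let β ∈ ℝ^p with μ > 0, Γ a positive semidefinite p×p matrix, u ∈ ℝ^p, and J : ℝ^p → ℝ convex. If (u − Γβ)/μ ∈ ri(∂J(β)) and ker(Γ) ∩ T_β = {0}, where T_β is the orthogonal complement of the linear hull of differences of elements of ∂J(β), then β is the unique minimizer of β' ↦ J(β') + (1/(2μ))⟨Γβ', β'⟩ − (1/μ)⟨β', u⟩. -/

import Mathlib

open scoped RealInnerProductSpace

section Aux

variable {E : Type*} [NormedAddCommGroup E] [InnerProductSpace ℝ E] [CompleteSpace E]

lemma real_aux {a c : ℝ} (hc : 0 ≤ c) (h : ∀ t : ℝ, 0 ≤ 2 * t * a + t ^ 2 * c) : a = 0 := by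
  by_contra ha
  have hc1 : (0:ℝ) < c + 1 := by linarith
  have hd : (0:ℝ) < (c + 1) ^ 2 := by positivity
  have ha2 : 0 < a ^ 2 := by rcases lt_or_gt_of_ne ha with h' | h' <;> nlinarith
  have h1 := h (-a / (c + 1))
  have e : 2 * (-a / (c + 1)) * a + (-a / (c + 1)) ^ 2 * c
      = -(a ^ 2 * (c + 2)) / (c + 1) ^ 2 := by
    field_simp
    ring
  rw [e] at h1
  have h3 := (le_div_iff₀ hd).1 h1
  nlinarith

lemma psd_ker {Γ : E →L[ℝ] E} (hsym : IsSelfAdjoint Γ) (hpsd : ∀ v, 0 ≤ ⟪Γ v, v⟫)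
    {h : E} (h0 : ⟪Γ h, h⟫ = 0) : Γ h = 0 := by
  have hsymm : ∀ x y : E, ⟪Γ x, y⟫ = ⟪x, Γ y⟫ := by
    intro x y
    exact ((ContinuousLinearMap.isSelfAdjoint_iff_isSymmetric).1 hsym) x y
  have key : ∀ v : E, ⟪Γ h, v⟫ = 0 := by
    intro v
    apply real_aux (hpsd v)
    intro t
    have hexp : ⟪Γ (h + t • v), h + t • v⟫ = 2 * t * ⟪Γ h, v⟫ + t ^ 2 * ⟪Γ v, v⟫ := by
      have e1 : ⟪Γ v, h⟫ = ⟪Γ h, v⟫ := by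
        rw [hsymm v h, real_inner_comm]
      simp only [map_add, map_smul, inner_add_left, inner_add_right,
        inner_smul_left, inner_smul_right, RCLike.conj_to_real]
      rw [h0, e1]
      ring
    rw [← hexp]
    exact hpsd _
  have := key (Γ h)
  exact inner_self_eq_zero.1 this

lemma line_mem_of_intrinsicInterior {C : Set E} {η₀ : E}
    (hη : η₀ ∈ intrinsicInterior ℝ C) {d : E}
    (hd : d ∈ (affineSpan ℝ C).direction) :
    ∃ ε > (0:ℝ), ∀ t : ℝ, |t| < ε → η₀ + t • d ∈ C := by
  obtain ⟨z, hz, hzval⟩ := hη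
  have hη₀span : η₀ ∈ affineSpan ℝ C := hzval ▸ z.2
  have hmem : ∀ t : ℝ, η₀ + t • d ∈ affineSpan ℝ C := by
    intro t
    have := AffineSubspace.vadd_mem_of_mem_direction
      (Submodule.smul_mem _ t hd) hη₀span
    simpa [vadd_eq_add, add_comm] using this
  set f : ℝ → (affineSpan ℝ C : Set E) := fun t => ⟨η₀ + t • d, hmem t⟩ with hf
  have hcont : Continuous f := by
    apply Continuous.subtype_mk
    exact continuous_const.add (continuous_id.smul continuous_const)
  have hopen : IsOpen (f ⁻¹' interior ((↑) ⁻¹' C : Set (affineSpan ℝ C))) :=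
    isOpen_interior.preimage hcont
  have h0 : (0:ℝ) ∈ f ⁻¹' interior ((↑) ⁻¹' C : Set (affineSpan ℝ C)) := by
    have : f 0 = z := by
      apply Subtype.ext
      simp [hf, hzval]
    simpa [this] using hz
  obtain ⟨ε, hε, hball⟩ := Metric.isOpen_iff.1 hopen 0 h0
  refine ⟨ε, hε, fun t ht => ?_⟩
  have : t ∈ Metric.ball (0:ℝ) ε := by
    simpa [Real.dist_eq] using ht
  have := interior_subset (hball this)
  simpa [hf] using this

lemma alg (μ Jb Jb' A B C D Q E : ℝ) (hμ : 0 < μ)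
    (h1 : Jb + E ≤ Jb')
    (h2 : 0 < E + μ⁻¹ * C - μ⁻¹ * D + (1 / (2 * μ)) * Q) :
    Jb + 1 / (2 * μ) * A - 1 / μ * B < Jb' + 1 / (2 * μ) * (A + 2 * C + Q) - 1 / μ * (B + D) := by
  have hμ' : μ ≠ 0 := ne_of_gt hμ
  have e1 : 1 / (2 * μ) * (A + 2 * C + Q) = 1 / (2 * μ) * A + μ⁻¹ * C + 1 / (2 * μ) * Q := by
    field_simp
  have e2 : 1 / μ * (B + D) = 1 / μ * B + μ⁻¹ * D := by
    rw [mul_add, one_div]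
  rw [e1, e2]
  linarith

end Aux

noncomputable def subdiff {p : ℕ} (J : EuclideanSpace ℝ (Fin p) → ℝ)
    (β : EuclideanSpace ℝ (Fin p)) : Set (EuclideanSpace ℝ (Fin p)) :=
  {η | ∀ β', J β + ⟪η, β' - β⟫ ≤ J β'}

/-- Linear hull of a convex set: the span of all differences of its elements. -/
noncomputable def vectHull {p : ℕ} (C : Set (EuclideanSpace ℝ (Fin p))) :
    Submodule ℝ (EuclideanSpace ℝ (Fin p)) :=
  Submodule.span ℝ {d | ∃ x ∈ C, ∃ y ∈ C, d = x - y}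

/-- The tangent model subspace `T_β = VectHull(∂J(β))^⊥`. -/
noncomputable def Tmod {p : ℕ} (J : EuclideanSpace ℝ (Fin p) → ℝ)
    (β : EuclideanSpace ℝ (Fin p)) : Submodule ℝ (EuclideanSpace ℝ (Fin p)) :=
  (vectHull (subdiff J β))ᗮ

/-- Proposition 2: interior dual certificate plus restricted injectivity imply that
`β` is the unique minimizer of the regularized least-squares objective. -/
theorem unique_minimizer_of_interior_certificate {p : ℕ}
    (J : EuclideanSpace ℝ (Fin p) → ℝ) (hJ : ConvexOn ℝ Set.univ J)
    (μ : ℝ) (hμ : 0 < μ)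
    (Γ : EuclideanSpace ℝ (Fin p) →L[ℝ] EuclideanSpace ℝ (Fin p))
    (hΓsym : IsSelfAdjoint Γ) (hΓpsd : ∀ v, 0 ≤ ⟪Γ v, v⟫)
    (u β : EuclideanSpace ℝ (Fin p))
    (hcert : μ⁻¹ • (u - Γ β) ∈ intrinsicInterior ℝ (subdiff J β))
    (hker : LinearMap.ker (Γ : EuclideanSpace ℝ (Fin p) →ₗ[ℝ] EuclideanSpace ℝ (Fin p)) ⊓ Tmod J β = ⊥) :
    ∀ β', β' ≠ β →
      J β + (1 / (2 * μ)) * ⟪Γ β, β⟫ - (1 / μ) * ⟪β, u⟫ <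
      J β' + (1 / (2 * μ)) * ⟪Γ β', β'⟫ - (1 / μ) * ⟪β', u⟫ := by
  intro β' hβ'
  set η₀ : EuclideanSpace ℝ (Fin p) := μ⁻¹ • (u - Γ β) with hη₀
  have hsymm : ∀ x y, ⟪Γ x, y⟫ = ⟪x, Γ y⟫ :=
    fun x y => ((ContinuousLinearMap.isSelfAdjoint_iff_isSymmetric).1 hΓsym) x y
  -- main reduction
  have main : ∀ η ∈ subdiff J β,
      0 < ⟪η, β' - β⟫ + μ⁻¹ * ⟪Γ β, β' - β⟫ - μ⁻¹ * ⟪β' - β, u⟫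
          + (1 / (2 * μ)) * ⟪Γ (β' - β), β' - β⟫ →
      J β + 1 / (2 * μ) * ⟪Γ β, β⟫ - 1 / μ * ⟪β, u⟫ <
      J β' + 1 / (2 * μ) * ⟪Γ β', β'⟫ - 1 / μ * ⟪β', u⟫ := by
    intro η hη hpos
    have hb : β' = β + (β' - β) := by abel
    have E1 : ⟪Γ β', β'⟫ = ⟪Γ β, β⟫ + 2 * ⟪Γ β, β' - β⟫ + ⟪Γ (β' - β), β' - β⟫ := by
      conv_lhs => rw [hb]
      rw [map_add, inner_add_left, inner_add_right, inner_add_right]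
      have : ⟪Γ (β' - β), β⟫ = ⟪Γ β, β' - β⟫ := by
        rw [hsymm (β' - β) β, real_inner_comm]
      rw [this]
      ring
    have E2 : ⟪β', u⟫ = ⟪β, u⟫ + ⟪β' - β, u⟫ := by
      conv_lhs => rw [hb]
      rw [inner_add_left]
    rw [E1, E2]
    exact alg μ (J β) (J β') _ _ _ _ _ _ hμ (hη β') hpos
  -- the certificate is a subgradient
  have hη₀sub : η₀ ∈ subdiff J β := intrinsicInterior_subset hcert
  have hη₀inner : ∀ w, ⟪η₀, w⟫ = μ⁻¹ * ⟪w, u⟫ - μ⁻¹ * ⟪Γ β, w⟫ := by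
    intro w
    rw [hη₀, real_inner_smul_left, inner_sub_left, real_inner_comm u w]
    ring
  have hQnn : 0 ≤ ⟪Γ (β' - β), β' - β⟫ := hΓpsd _
  rcases lt_or_eq_of_le hQnn with hQ | hQ
  · -- positive quadratic term
    refine main η₀ hη₀sub ?_
    rw [hη₀inner]
    have : 0 < (1 / (2 * μ)) * ⟪Γ (β' - β), β' - β⟫ := by positivity
    linarith
  · -- kernel case
    have hΓh : Γ (β' - β) = 0 := psd_ker hΓsym hΓpsd hQ.symm
    have hker' : (β' - β) ∉ Tmod J β := by
      intro hmem
      have : (β' - β) ∈ LinearMap.ker (Γ : EuclideanSpace ℝ (Fin p) →ₗ[ℝ] EuclideanSpace ℝ (Fin p)) ⊓ Tmod J β := by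
        refine ⟨?_, hmem⟩
        simpa [LinearMap.mem_ker] using hΓh
      rw [hker] at this
      exact hβ' (by simpa [sub_eq_zero] using (Submodule.mem_bot ℝ).1 this)
    -- find a generator not orthogonal to β' - β
    have hgen : ∃ x ∈ subdiff J β, ∃ y ∈ subdiff J β, ⟪x - y, β' - β⟫ ≠ 0 := by
      by_contra hco
      push_neg at hco
      apply hker'
      rw [Tmod, Submodule.mem_orthogonal]
      intro v hv
      induction hv using Submodule.span_induction with
      | mem d hd =>
        obtain ⟨x, hx, y, hy, rfl⟩ := hd
        exact hco x hx y hy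
      | zero => simp
      | add _ _ _ _ h1 h2 => rw [inner_add_left, h1, h2, add_zero]
      | smul a _ _ h1 => rw [real_inner_smul_left, h1, mul_zero]
    obtain ⟨x, hx, y, hy, hxy⟩ := hgen
    -- x - y is in the direction of the affine span
    have hdmem : x - y ∈ (affineSpan ℝ (subdiff J β)).direction := by
      have := AffineSubspace.vsub_mem_direction
        (subset_affineSpan ℝ _ hx) (subset_affineSpan ℝ _ hy)
      simpa [vsub_eq_sub] using this
    obtain ⟨ε, hε, hline⟩ := line_mem_of_intrinsicInterior hcert hdmem
    set a : ℝ := ⟪x - y, β' - β⟫ with hadef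
    -- choose t with t * a > 0 and |t| < ε
    obtain ⟨t, hta, htε⟩ : ∃ t : ℝ, 0 < t * a ∧ |t| < ε := by
      rcases hxy.lt_or_gt with hneg | hpos
      · refine ⟨-(ε / 2), by nlinarith, by rw [abs_neg, abs_of_pos (by linarith)]; linarith⟩
      · refine ⟨ε / 2, by nlinarith, by rw [abs_of_pos (by linarith)]; linarith⟩
    have hηt : η₀ + t • (x - y) ∈ subdiff J β := hline t htε
    refine main _ hηt ?_
    rw [inner_add_left, real_inner_smul_left, real_inner_smul_left, inner_sub_left,
      real_inner_comm u (β' - β), ← hQ]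
    linarith
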